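/- For each k ≥ 0, the number of paths of length n with steps U=+1, D=-1, F=0, starting at height 0, staying nonnegative, and ending at height k, has generating function z^k · M(z)^{k+1}, where M is the Motzkin generating function. -/

import Mathlib

open PowerSeries

abbrev PathTy (n : ℕ) (k : ℤ) :=
  {s : Fin n → ℤ //
    (∀ i, s i = -1 ∨ s i = 0 ∨ s i = 1) ∧
    (∀ m : ℕ, 0 ≤ ∑ i ∈ Finset.univ.filter (fun i : Fin n => (i : ℕ) < m), s i) ∧
    (∑ i, s i) = k}

lemma partial_succ (n m : ℕ) (s : Fin (n+1) → ℤ) :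
    ∑ i ∈ Finset.univ.filter (fun i : Fin (n+1) => (i : ℕ) < m), s i
      = (∑ i ∈ Finset.univ.filter (fun i : Fin n => (i : ℕ) < m), Fin.init s i)
        + (if n < m then s (Fin.last n) else 0) := by
  rw [Finset.sum_filter, Finset.sum_filter, Fin.sum_univ_castSucc]
  simp [Fin.init, Fin.last]

lemma partial_total (n m : ℕ) (hm : n ≤ m) (s : Fin n → ℤ) :
    ∑ i ∈ Finset.univ.filter (fun i : Fin n => (i : ℕ) < m), s i = ∑ i, s i := by
  rw [Finset.filter_true_of_mem]
  intro i _
  exact lt_of_lt_of_le i.isLt hm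

lemma trunc_mem {n : ℕ} {k : ℤ} (s : Fin (n+1) → ℤ)
    (h1 : ∀ i, s i = -1 ∨ s i = 0 ∨ s i = 1)
    (h2 : ∀ m : ℕ, 0 ≤ ∑ i ∈ Finset.univ.filter (fun i : Fin (n+1) => (i : ℕ) < m), s i)
    (h3 : (∑ i, s i) = k) :
    (∀ i, Fin.init s i = -1 ∨ Fin.init s i = 0 ∨ Fin.init s i = 1) ∧
    (∀ m : ℕ, 0 ≤ ∑ i ∈ Finset.univ.filter (fun i : Fin n => (i : ℕ) < m), Fin.init s i) ∧
    (∑ i, Fin.init s i) = k - s (Fin.last n) := by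
  have htot : (∑ i, Fin.init s i) = k - s (Fin.last n) := by
    have h := Fin.sum_univ_castSucc s
    rw [h3] at h
    simp only [Fin.init]
    linarith
  have hpos : 0 ≤ k - s (Fin.last n) := by
    have := h2 n
    rw [partial_succ, if_neg (lt_irrefl n), partial_total n n le_rfl, htot, add_zero] at this
    exact this
  refine ⟨fun i => h1 _, fun m => ?_, htot⟩
  by_cases hm : n < m
  · rw [partial_total n m (le_of_lt hm), htot]; exact hpos
  · have := h2 m
    rw [partial_succ, if_neg hm, add_zero] at this
    exact this

lemma ext_mem {n : ℕ} {j e : ℤ} (t : Fin n → ℤ)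
    (h1 : ∀ i, t i = -1 ∨ t i = 0 ∨ t i = 1)
    (h2 : ∀ m : ℕ, 0 ≤ ∑ i ∈ Finset.univ.filter (fun i : Fin n => (i : ℕ) < m), t i)
    (h3 : (∑ i, t i) = j)
    (he : e = -1 ∨ e = 0 ∨ e = 1) (hpos : 0 ≤ j + e) :
    (∀ i, (Fin.snoc t e : Fin (n+1) → ℤ) i = -1 ∨ (Fin.snoc t e : Fin (n+1) → ℤ) i = 0 ∨ (Fin.snoc t e : Fin (n+1) → ℤ) i = 1) ∧
    (∀ m : ℕ, 0 ≤ ∑ i ∈ Finset.univ.filter (fun i : Fin (n+1) => (i : ℕ) < m), (Fin.snoc t e : Fin (n+1) → ℤ) i) ∧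
    (∑ i, (Fin.snoc t e : Fin (n+1) → ℤ) i) = j + e := by
  have hinit : Fin.init (Fin.snoc t e : Fin (n+1) → ℤ) = t := by simp
  have hlast : (Fin.snoc t e : Fin (n+1) → ℤ) (Fin.last n) = e := by simp
  refine ⟨?_, ?_, ?_⟩
  · intro i
    refine Fin.lastCases ?_ ?_ i
    · rw [hlast]; exact he
    · intro j'
      rw [Fin.snoc_castSucc]
      exact h1 j'
  · intro m
    rw [partial_succ, hinit, hlast]
    by_cases hm : n < m
    · rw [if_pos hm, partial_total n m (le_of_lt hm), h3]; exact hpos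
    · rw [if_neg hm, add_zero]; exact h2 m
  · rw [Fin.sum_univ_castSucc]
    simp only [Fin.snoc_castSucc, hlast, h3]

instance pathFinite (n : ℕ) (k : ℤ) : Finite (PathTy n k) := by
  have hT : (Set.pi Set.univ (fun _ : Fin n => ({-1, 0, 1} : Set ℤ))).Finite :=
    Set.Finite.pi (fun _ => (Set.finite_singleton 1).insert 0 |>.insert (-1))
  haveI := hT.to_subtype
  apply Finite.of_injective
    (fun s : PathTy n k =>
      (⟨s.1, fun i _ => by have := s.2.1 i; simp only [Set.mem_insert_iff, Set.mem_singleton_iff]; tauto⟩ :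
        (Set.pi Set.univ (fun _ : Fin n => ({-1, 0, 1} : Set ℤ)))))
  intro a b hab
  simp only [Subtype.mk.injEq] at hab
  exact Subtype.ext (by have := Subtype.mk.inj hab; exact this)

lemma path_neg_empty (n : ℕ) : IsEmpty (PathTy n (-1)) := by
  constructor
  rintro ⟨s, _, h2, h3⟩
  have := h2 n
  rw [partial_total n n le_rfl, h3] at this
  omega

def pathEquiv (n k : ℕ) :
    PathTy (n+1) (k : ℤ) ≃ (PathTy n ((k : ℤ) + 1)) ⊕ (PathTy n (k : ℤ)) ⊕ (PathTy n ((k : ℤ) - 1)) where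
  toFun s :=
    if h : s.1 (Fin.last n) = -1 then
      Sum.inl ⟨Fin.init s.1, by
        obtain ⟨A, B, C⟩ := trunc_mem s.1 s.2.1 s.2.2.1 s.2.2.2
        exact ⟨A, B, by rw [C, h]; ring⟩⟩
    else if h0 : s.1 (Fin.last n) = 0 then
      Sum.inr (Sum.inl ⟨Fin.init s.1, by
        obtain ⟨A, B, C⟩ := trunc_mem s.1 s.2.1 s.2.2.1 s.2.2.2
        exact ⟨A, B, by rw [C, h0]; ring⟩⟩)
    else
      Sum.inr (Sum.inr ⟨Fin.init s.1, by
        have h1 : s.1 (Fin.last n) = 1 := by rcases s.2.1 (Fin.last n) with h' | h' | h' <;> tauto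
        obtain ⟨A, B, C⟩ := trunc_mem s.1 s.2.1 s.2.2.1 s.2.2.2
        exact ⟨A, B, by rw [C, h1]⟩⟩)
  invFun b :=
    match b with
    | Sum.inl t => ⟨Fin.snoc t.1 (-1), by
        obtain ⟨A, B, C⟩ := ext_mem t.1 t.2.1 t.2.2.1 t.2.2.2 (Or.inl rfl)
          (by omega)
        exact ⟨A, B, by rw [C]; ring⟩⟩
    | Sum.inr (Sum.inl t) => ⟨Fin.snoc t.1 0, by
        obtain ⟨A, B, C⟩ := ext_mem t.1 t.2.1 t.2.2.1 t.2.2.2 (Or.inr (Or.inl rfl))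
          (by omega)
        exact ⟨A, B, by rw [C]; ring⟩⟩
    | Sum.inr (Sum.inr t) => ⟨Fin.snoc t.1 1, by
        obtain ⟨A, B, C⟩ := ext_mem t.1 t.2.1 t.2.2.1 t.2.2.2 (Or.inr (Or.inr rfl))
          (by omega)
        exact ⟨A, B, by rw [C]; ring⟩⟩
  left_inv s := by
    have hsnoc : ∀ e : ℤ, s.1 (Fin.last n) = e → Fin.snoc (Fin.init s.1) e = s.1 := by
      intro e he
      rw [← he]
      exact Fin.snoc_init_self s.1
    dsimp only
    split_ifs with h h0
    · exact Subtype.ext (hsnoc _ h)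
    · exact Subtype.ext (hsnoc _ h0)
    · have h1 : s.1 (Fin.last n) = 1 := by rcases s.2.1 (Fin.last n) with h' | h' | h' <;> tauto
      exact Subtype.ext (hsnoc _ h1)
  right_inv b := by
    rcases b with t | t | t
    · dsimp only
      rw [dif_pos (by simp : (Fin.snoc t.1 (-1) : Fin (n+1) → ℤ) (Fin.last n) = -1)]
      congr 1
      exact Subtype.ext (by simp)
    · dsimp only
      rw [dif_neg (by simp : ¬ (Fin.snoc t.1 0 : Fin (n+1) → ℤ) (Fin.last n) = -1),
        dif_pos (by simp : (Fin.snoc t.1 0 : Fin (n+1) → ℤ) (Fin.last n) = 0)]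
      congr 2
      exact Subtype.ext (by simp)
    · dsimp only
      rw [dif_neg (by simp : ¬ (Fin.snoc t.1 1 : Fin (n+1) → ℤ) (Fin.last n) = -1),
        dif_neg (by simp : ¬ (Fin.snoc t.1 1 : Fin (n+1) → ℤ) (Fin.last n) = 0)]
      congr 2
      exact Subtype.ext (by simp)

lemma card_rec (n k : ℕ) :
    Nat.card (PathTy (n+1) (k : ℤ)) =
      Nat.card (PathTy n ((k : ℤ) + 1)) + Nat.card (PathTy n (k : ℤ))
        + Nat.card (PathTy n ((k : ℤ) - 1)) := by
  rw [Nat.card_congr (pathEquiv n k), Nat.card_sum, Nat.card_sum, add_assoc]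

lemma card_zero (k : ℤ) : Nat.card (PathTy 0 k) = if k = 0 then 1 else 0 := by
  split_ifs with h
  · subst h
    have : Unique (PathTy 0 (0 : ℤ)) :=
      { default := ⟨fun i => i.elim0, fun i => i.elim0, fun m => by simp, by simp⟩
        uniq := fun s => Subtype.ext (funext fun i => i.elim0) }
    exact Nat.card_unique
  · have : IsEmpty (PathTy 0 k) := by
      constructor
      rintro ⟨s, _, _, h3⟩
      simp at h3
      exact h (h3.symm)
    exact Nat.card_of_isEmpty

theorem paths_key
    (M : PowerSeries ℚ)
    (hM0 : constantCoeff M = 1)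
    (hM : M = 1 + X * M + X ^ 2 * M ^ 2) :
    ∀ (n k : ℕ), (Nat.card (PathTy n (k : ℤ)) : ℚ) = coeff n (X ^ k * M ^ (k + 1)) := by
  have hF0 : (X : PowerSeries ℚ) ^ 0 * M ^ 1 = 1 + X * (X ^ 1 * M ^ 2 + X ^ 0 * M ^ 1) := by
    linear_combination hM
  have hFk : ∀ j : ℕ, (X : PowerSeries ℚ) ^ (j+1) * M ^ (j+2)
      = X * (X ^ (j+2) * M ^ (j+3) + X ^ (j+1) * M ^ (j+2) + X ^ j * M ^ (j+1)) := by
    intro j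
    linear_combination (X ^ (j+1) * M ^ (j+1)) * hM
  intro n
  induction n with
  | zero =>
    intro k
    rw [coeff_zero_eq_constantCoeff, map_mul, map_pow, map_pow, hM0, one_pow,
      mul_one, constantCoeff_X, zero_pow_eq, card_zero]
    rcases eq_or_ne k 0 with h | h
    · subst h; norm_num
    · rw [if_neg (by exact_mod_cast h), if_neg h]; norm_num
  | succ n ih =>
    intro k
    rw [card_rec]
    push_cast
    match k with
    | 0 =>
      haveI := path_neg_empty n
      have e1 : (((0:ℕ):ℤ) + 1) = ((1:ℕ):ℤ) := by norm_num
      have em : (((0:ℕ):ℤ) - 1) = (-1 : ℤ) := by norm_num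
      rw [e1, em, ih 1, Nat.card_of_isEmpty (α := PathTy n (-1))]
      have e2 : ((0:ℕ):ℤ) = ((0:ℕ):ℤ) := rfl
      rw [ih 0]
      conv_rhs => rw [hF0]
      rw [map_add, coeff_succ_X_mul, map_add, coeff_one, if_neg (by omega : ¬ n + 1 = 0)]
      push_cast
      ring_nf
    | (j+1) =>
      have e1 : ((j+1:ℕ) : ℤ) + 1 = ((j+2:ℕ) : ℤ) := by push_cast; ring
      have e2 : ((j+1:ℕ) : ℤ) - 1 = ((j:ℕ) : ℤ) := by push_cast; ring
      rw [e1, e2, ih (j+2), ih (j+1), ih j]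
      conv_rhs => rw [hFk j]
      rw [coeff_succ_X_mul, map_add, map_add]

/-- Nonnegative paths of length n ending at level k have generating function z^k·M^{k+1}. -/
theorem paths_ending_at_level_k_gf
    (M : PowerSeries ℚ)
    (hM0 : constantCoeff M = 1)
    (hM : M = 1 + X * M + X ^ 2 * M ^ 2)
    (k : ℕ) :
    PowerSeries.mk (fun n =>
      (Nat.card {s : Fin n → ℤ //
        (∀ i, s i = -1 ∨ s i = 0 ∨ s i = 1) ∧
        (∀ m : ℕ, 0 ≤ ∑ i ∈ Finset.univ.filter (fun i : Fin n => (i : ℕ) < m), s i) ∧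
        (∑ i, s i) = (k : ℤ)} : ℚ)) = X ^ k * M ^ (k + 1) := by
  ext n
  rw [coeff_mk]
  exact paths_key M hM0 hM n k
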